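/- Fix n, m ≥ 0 and integers a₁, …, a_m, and let I ⊆ ℝ be an interval. Let h, h₁ : ℝ → ℂ, xⱼ : ℝ → ℂ (1 ≤ j ≤ n), qₗ : ℝ → ℂ (1 ≤ l ≤ m), and νⱼ : ℝ → ℂ be functions such that for EVERY t ∈ I: the values h(t), x₁(t), …, xₙ(t), q₁(t), …, q_m(t) satisfy h(t) ≠ xⱼ(t), h(t) ≠ qₗ(t), xⱼ(t) ≠ x_k(t) for j ≠ k, xⱼ(t) ≠ qₗ(t), h₁(t) ≠ 0; h has derivative Σⱼ 2νⱼ(t)/(h(t) − xⱼ(t)) at t; h₁ has derivative −h₁(t)·Σⱼ 2νⱼ(t)/(h(t) − xⱼ(t))² at t; each x_k has derivative ν_k(t)·( Σ_{j≠k} 2/(x_k(t) − xⱼ(t)) + Σₗ aₗ/(x_k(t) − qₗ(t)) ) + Σ_{j≠k} 2νⱼ(t)/(x_k(t) − xⱼ(t)) at t; and each qₗ has derivative Σⱼ 2νⱼ(t)/(qₗ(t) − xⱼ(t)) at t. Then the function N(t) = h₁(t)² · ∏_{k=1}^{n} (h(t) − x_k(t))² · ∏_{l=1}^{m} (h(t)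 − qₗ(t))^{aₗ} is constant on I: N(s) = N(t) for all s, t ∈ I. -/

import Mathlib

open Finset

lemma sum_erase_eq_sum_ite {ι : Type*} [Fintype ι] [DecidableEq ι] (k : ι) (g : ι → ℂ) :
    ∑ j ∈ univ.erase k, g j = ∑ j, if j ≠ k then g j else 0 := by
  rw [← Finset.sum_filter, Finset.filter_ne']

lemma sum_split_diag {ι : Type*} [Fintype ι] [DecidableEq ι] (k : ι) (g : ι → ℂ) :
    ∑ j, g j = (∑ j, if j ≠ k then g j else 0) + g k := by
  rw [← sum_erase_eq_sum_ite]
  exact (Finset.sum_erase_add _ _ (mem_univ k)).symm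

lemma swap_ite_sum {n : ℕ} (F : Fin n → Fin n → ℂ) :
    ∑ k, ∑ j, (if j ≠ k then F k j else 0) = ∑ k, ∑ j, (if j ≠ k then F j k else 0) := by
  rw [Finset.sum_comm]
  refine Finset.sum_congr rfl fun k _ => Finset.sum_congr rfl fun j _ => ?_
  congr 1
  simp [ne_comm]

lemma key_identity (n m : ℕ) (A : Fin m → ℂ) (H : ℂ) (X : Fin n → ℂ) (Q : Fin m → ℂ)
    (V : Fin n → ℂ)
    (hHX : ∀ j, H ≠ X j) (hHQ : ∀ l, H ≠ Q l)
    (hXX : ∀ j k, j ≠ k → X j ≠ X k) (hXQ : ∀ j l, X j ≠ Q l) :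
    (-2) * (∑ j, 2 * V j / (H - X j) ^ 2)
      + (∑ k, 2 * ((∑ j, 2 * V j / (H - X j)) -
          (V k * ((∑ j ∈ univ.erase k, 2 / (X k - X j)) + ∑ l, A l / (X k - Q l))
            + ∑ j ∈ univ.erase k, 2 * V j / (X k - X j))) / (H - X k))
      + ∑ l, A l * ((∑ j, 2 * V j / (H - X j)) - ∑ j, 2 * V j / (Q l - X j)) / (H - Q l)
      = 0 := by
  have hHX' : ∀ j, H - X j ≠ 0 := fun j => sub_ne_zero.mpr (hHX j)
  have hHQ' : ∀ l, H - Q l ≠ 0 := fun l => sub_ne_zero.mpr (hHQ l)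
  have hXX' : ∀ j k, j ≠ k → X j - X k ≠ 0 := fun j k hjk => sub_ne_zero.mpr (hXX j k hjk)
  have hXQ' : ∀ j l, X j - Q l ≠ 0 := fun j l => sub_ne_zero.mpr (hXQ j l)
  have hQX' : ∀ l j, Q l - X j ≠ 0 := fun l j => sub_ne_zero.mpr (hXQ j l).symm
  -- Term C
  have hC : (∑ l, A l * ((∑ j, 2 * V j / (H - X j)) - ∑ j, 2 * V j / (Q l - X j)) / (H - Q l))
      = ∑ k, (2 * V k / (H - X k)) * ∑ l, A l / (X k - Q l) := by
    calc ∑ l, A l * ((∑ j, 2 * V j / (H - X j)) - ∑ j, 2 * V j / (Q l - X j)) / (H - Q l)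
        = ∑ l, ∑ j, A l * (2 * V j / (H - X j) - 2 * V j / (Q l - X j)) / (H - Q l) := by
          refine Finset.sum_congr rfl fun l _ => ?_
          rw [← Finset.sum_sub_distrib, Finset.mul_sum, Finset.sum_div]
      _ = ∑ l, ∑ j, (2 * V j / (H - X j)) * (A l / (X j - Q l)) := by
          refine Finset.sum_congr rfl fun l _ => Finset.sum_congr rfl fun j _ => ?_
          have h1 := hHX' j
          have h2 := hQX' l j
          have h3 := hHQ' l
          have h4 := hXQ' j l
          field_simp
          ring
      _ = ∑ j, ∑ l, (2 * V j / (H - X j)) * (A l / (X j - Q l)) := Finset.sum_comm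
      _ = ∑ k, (2 * V k / (H - X k)) * ∑ l, A l / (X k - Q l) := by
          refine Finset.sum_congr rfl fun k _ => ?_
          rw [Finset.mul_sum]
  -- Term A
  have hA : (-2 : ℂ) * (∑ j, 2 * V j / (H - X j) ^ 2)
      = -∑ k, 4 * V k / ((H - X k) * (H - X k)) := by
    rw [Finset.mul_sum, ← Finset.sum_neg_distrib]
    exact Finset.sum_congr rfl fun j _ => by ring
  -- Split of term B
  have hBsplit : (∑ k, 2 * ((∑ j, 2 * V j / (H - X j)) -
          (V k * ((∑ j ∈ univ.erase k, 2 / (X k - X j)) + ∑ l, A l / (X k - Q l))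
            + ∑ j ∈ univ.erase k, 2 * V j / (X k - X j))) / (H - X k))
      = (∑ k, 2 * (∑ j, 2 * V j / (H - X j)) / (H - X k))
        - (∑ k, 2 * V k * (∑ l, A l / (X k - Q l)) / (H - X k))
        - ∑ k, (2 * V k * (∑ j ∈ univ.erase k, 2 / (X k - X j))
            + 2 * (∑ j ∈ univ.erase k, 2 * V j / (X k - X j))) / (H - X k) := by
    rw [← Finset.sum_sub_distrib, ← Finset.sum_sub_distrib]
    exact Finset.sum_congr rfl fun k _ => by ring
  -- B1
  have hB1 : (∑ k, 2 * (∑ j, 2 * V j / (H - X j)) / (H - X k))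
      = (∑ k, ∑ j, if j ≠ k then 4 * V j / ((H - X k) * (H - X j)) else 0)
        + ∑ k, 4 * V k / ((H - X k) * (H - X k)) := by
    rw [← Finset.sum_add_distrib]
    refine Finset.sum_congr rfl fun k _ => ?_
    rw [Finset.mul_sum, Finset.sum_div, sum_split_diag k (fun j => 2 * (2 * V j / (H - X j)) / (H - X k))]
    congr 1
    · refine Finset.sum_congr rfl fun j _ => ?_
      by_cases hjk : j ≠ k
      · simp only [if_pos hjk]
        have h1 := hHX' j
        have h2 := hHX' k
        field_simp
        ring
      · simp [hjk]
    · have h2 := hHX' k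
      field_simp
      ring
  -- B2 matches C
  have hB2 : (∑ k, 2 * V k * (∑ l, A l / (X k - Q l)) / (H - X k))
      = ∑ k, (2 * V k / (H - X k)) * ∑ l, A l / (X k - Q l) :=
    Finset.sum_congr rfl fun k _ => by ring
  -- B3
  have hB3 : (∑ k, (2 * V k * (∑ j ∈ univ.erase k, 2 / (X k - X j))
            + 2 * (∑ j ∈ univ.erase k, 2 * V j / (X k - X j))) / (H - X k))
      = ∑ k, ∑ j, if j ≠ k then (4 * V k + 4 * V j) / ((H - X k) * (X k - X j)) else 0 := by
    refine Finset.sum_congr rfl fun k _ => ?_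
    rw [sum_erase_eq_sum_ite, sum_erase_eq_sum_ite, Finset.mul_sum, Finset.mul_sum,
      ← Finset.sum_add_distrib, Finset.sum_div]
    refine Finset.sum_congr rfl fun j _ => ?_
    by_cases hjk : j ≠ k
    · simp only [if_pos hjk, mul_ite, mul_zero]
      have h1 := hHX' k
      have h2 := hXX' k j (Ne.symm hjk)
      field_simp
      ring
    · simp [hjk]
  -- main cancellation
  have hmain : (∑ k, ∑ j, if j ≠ k then 4 * V j / ((H - X k) * (H - X j)) else 0)
      = ∑ k, ∑ j, if j ≠ k then (4 * V k + 4 * V j) / ((H - X k) * (X k - X j)) else 0 := by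
    rw [swap_ite_sum (fun k j => 4 * V j / ((H - X k) * (H - X j)))]
    have hsplit : (∑ k, ∑ j, if j ≠ k then (4 * V k + 4 * V j) / ((H - X k) * (X k - X j)) else 0)
        = (∑ k, ∑ j, if j ≠ k then 4 * V k / ((H - X k) * (X k - X j)) else 0)
          + ∑ k, ∑ j, if j ≠ k then 4 * V j / ((H - X k) * (X k - X j)) else 0 := by
      rw [← Finset.sum_add_distrib]
      refine Finset.sum_congr rfl fun k _ => ?_
      rw [← Finset.sum_add_distrib]
      refine Finset.sum_congr rfl fun j _ => ?_
      by_cases hjk : j ≠ k <;> simp [hjk] <;> ring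
    rw [hsplit, swap_ite_sum (fun k j => 4 * V j / ((H - X k) * (X k - X j))),
      ← Finset.sum_add_distrib]
    refine Finset.sum_congr rfl fun k _ => ?_
    rw [← Finset.sum_add_distrib]
    refine Finset.sum_congr rfl fun j _ => ?_
    by_cases hjk : j ≠ k
    · simp only [if_pos hjk]
      have h1 := hHX' j
      have h2 := hHX' k
      have h3 := hXX' j k hjk
      have h4 := hXX' k j (Ne.symm hjk)
      field_simp
      ring
    · simp [hjk]
  rw [hA, hBsplit, hB1, hB2, hB3, hC]
  linear_combination hmain
lemma hasDerivAt_prod_ratio {ι : Type*} [DecidableEq ι] (u : Finset ι)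
    (f : ι → ℝ → ℂ) (r : ι → ℂ) (t : ℝ)
    (hf : ∀ i ∈ u, HasDerivAt (f i) (f i t * r i) t) :
    HasDerivAt (fun s => ∏ i ∈ u, f i s) ((∏ i ∈ u, f i t) * ∑ i ∈ u, r i) t := by
  induction u using Finset.cons_induction with
  | empty => simpa using hasDerivAt_const t (1:ℂ)
  | cons i u hi ih =>
    have h1 := hf i (Finset.mem_cons_self i u)
    have h2 := ih (fun j hj => hf j (Finset.mem_cons_of_mem hj))
    have h3 := h1.mul h2
    simp only [Finset.prod_cons, Finset.sum_cons]
    refine h3.congr_deriv ?_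
    ring

/-- Integral of motion for the multiple chordal SLE(0) Loewner flow:
if on an interval `I` the points stay in general position and the functions satisfy the
Loewner evolution equations (as in the SLE(0) Loewner chain with charges `a l = 2 σ l`),
then `N(t) = h₁(t)^2 ⬝ ∏_k (h(t) - x_k(t))^2 ⬝ ∏_l (h(t) - q_l(t))^(a l)` is constant
on `I`. -/
theorem sle0_observable_integral_of_motion (n m : ℕ) (a : Fin m → ℤ)
    (I : Set ℝ) (hI : I.OrdConnected)
    (h h₁ : ℝ → ℂ) (x : Fin n → ℝ → ℂ) (q : Fin m → ℝ → ℂ) (ν : Fin n → ℝ → ℂ)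
    (hhx : ∀ t ∈ I, ∀ j, h t ≠ x j t) (hhq : ∀ t ∈ I, ∀ l, h t ≠ q l t)
    (hxx : ∀ t ∈ I, ∀ j k, j ≠ k → x j t ≠ x k t)
    (hxq : ∀ t ∈ I, ∀ j l, x j t ≠ q l t)
    (hh₁ : ∀ t ∈ I, h₁ t ≠ 0)
    (hdh : ∀ t ∈ I, HasDerivAt h (∑ j, 2 * ν j t / (h t - x j t)) t)
    (hdh₁ : ∀ t ∈ I, HasDerivAt h₁ (-(h₁ t) * ∑ j, 2 * ν j t / (h t - x j t) ^ 2) t)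
    (hdx : ∀ t ∈ I, ∀ k, HasDerivAt (x k)
      (ν k t * ((∑ j ∈ univ.erase k, 2 / (x k t - x j t)) +
          ∑ l, (a l : ℂ) / (x k t - q l t)) +
        ∑ j ∈ univ.erase k, 2 * ν j t / (x k t - x j t)) t)
    (hdq : ∀ t ∈ I, ∀ l, HasDerivAt (q l) (∑ j, 2 * ν j t / (q l t - x j t)) t) :
    ∀ s ∈ I, ∀ t ∈ I,
      h₁ s ^ 2 * (∏ k, (h s - x k s) ^ 2) * (∏ l, (h s - q l s) ^ (a l)) =
        h₁ t ^ 2 * (∏ k, (h t - x k t) ^ 2) * ∏ l, (h t - q l t) ^ (a l) := by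
  have key : ∀ u ∈ I, HasDerivAt
      (fun w => h₁ w ^ 2 * (∏ k, (h w - x k w) ^ 2) * ∏ l, (h w - q l w) ^ (a l))
      (0 : ℂ) u := by
    intro u hu
    -- chunk 1
    have c1 : HasDerivAt (fun w => h₁ w ^ 2)
        (h₁ u ^ 2 * ((-2 : ℂ) * ∑ j, 2 * ν j u / (h u - x j u) ^ 2)) u := by
      have h0 := (hasDerivAt_pow 2 (h₁ u)).comp u (hdh₁ u hu)
      refine h0.congr_deriv ?_
      push_cast
      ring
    -- chunk 2
    have c2 : ∀ k, HasDerivAt (fun w => (h w - x k w) ^ 2)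
        ((h u - x k u) ^ 2 *
          (2 * ((∑ j, 2 * ν j u / (h u - x j u)) -
            (ν k u * ((∑ j ∈ univ.erase k, 2 / (x k u - x j u)) +
                ∑ l, (a l : ℂ) / (x k u - q l u)) +
              ∑ j ∈ univ.erase k, 2 * ν j u / (x k u - x j u))) / (h u - x k u))) u := by
      intro k
      have h0 := (hasDerivAt_pow 2 (h u - x k u)).comp u ((hdh u hu).sub (hdx u hu k))
      refine h0.congr_deriv ?_
      have hne : h u - x k u ≠ 0 := sub_ne_zero.mpr (hhx u hu k)
      push_cast
      field_simp
    -- chunk 3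
    have c3 : ∀ l, HasDerivAt (fun w => (h w - q l w) ^ (a l))
        ((h u - q l u) ^ (a l) *
          ((a l : ℂ) * ((∑ j, 2 * ν j u / (h u - x j u)) -
            ∑ j, 2 * ν j u / (q l u - x j u)) / (h u - q l u))) u := by
      intro l
      have hne : h u - q l u ≠ 0 := sub_ne_zero.mpr (hhq u hu l)
      have h0 := (hasDerivAt_zpow (a l) (h u - q l u) (Or.inl hne)).comp u
        ((hdh u hu).sub (hdq u hu l))
      refine h0.congr_deriv ?_
      rw [zpow_sub_one₀ hne]
      ring
    have hP := hasDerivAt_prod_ratio univ (fun k w => (h w - x k w) ^ 2)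
      (fun k => 2 * ((∑ j, 2 * ν j u / (h u - x j u)) -
            (ν k u * ((∑ j ∈ univ.erase k, 2 / (x k u - x j u)) +
                ∑ l, (a l : ℂ) / (x k u - q l u)) +
              ∑ j ∈ univ.erase k, 2 * ν j u / (x k u - x j u))) / (h u - x k u))
      u (fun k _ => c2 k)
    have hQ := hasDerivAt_prod_ratio univ (fun l w => (h w - q l w) ^ (a l))
      (fun l => (a l : ℂ) * ((∑ j, 2 * ν j u / (h u - x j u)) -
            ∑ j, 2 * ν j u / (q l u - x j u)) / (h u - q l u))
      u (fun l _ => c3 l)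
    have htot := (c1.mul hP).mul hQ
    refine htot.congr_deriv ?_
    have hzero := key_identity n m (fun l => (a l : ℂ)) (h u) (fun j => x j u)
      (fun l => q l u) (fun j => ν j u)
      (fun j => hhx u hu j) (fun l => hhq u hu l)
      (fun j k hjk => hxx u hu j k hjk) (fun j l => hxq u hu j l)
    simp only [Pi.mul_apply]
    symm
    linear_combination (-(h₁ u ^ 2 * (∏ k, (h u - x k u) ^ 2) *
      (∏ l, (h u - q l u) ^ (a l)))) * hzero
  intro s hs t ht
  have hconv : Convex ℝ I := convex_iff_ordConnected.mpr hI
  have hbound := Convex.norm_image_sub_le_of_norm_hasDerivWithin_le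
    (f := fun w => h₁ w ^ 2 * (∏ k, (h w - x k w) ^ 2) * ∏ l, (h w - q l w) ^ (a l))
    (f' := fun _ => (0 : ℂ)) (C := 0)
    (fun u hu => (key u hu).hasDerivWithinAt) (fun u _ => by simp) hconv hs ht
  simp only [norm_zero, zero_mul] at hbound
  have := norm_le_zero_iff.mp hbound
  exact (sub_eq_zero.mp this).symm
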